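/- arXiv:2203.08091 — 2 statements merged into one kernel-verified Lean document; each statement's English description precedes it below -/
import Mathlib

section
/- Let L(q) := ∑_{k=0}^∞ ( ∏_{i=1}^{k−1}(k m + 1 − i n) / k! ) · (D q / n)^k ∈ ℚ[[q]] and μ(q) := ∑_{k=1}^∞ ( D^k · ∏_{i=1}^{k−1}(k m + 1 − i n) / (k! · k · n^k) ) · q^k ∈ ℚ[[q]]. Then L(q) = 1 + q·μ′(q) and L(q)^n − D·q·L(q)^m = 1 in ℚ[[q]]. -/
/-- Formal derivative `d/dq` on `ℚ[[q]]`. -/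
noncomputable def dQ (f : PowerSeries ℚ) : PowerSeries ℚ :=
  PowerSeries.mk fun k => ((k + 1 : ℕ) : ℚ) * PowerSeries.coeff (k + 1) f

noncomputable def aa (z x : ℚ) (k : ℕ) : ℚ :=
  if k = 0 then 1 else x * (∏ i ∈ Finset.range (k-1), (x + k*z - (i+1))) / (Nat.factorial k)

lemma aa_zero' (z x : ℚ) : aa z x 0 = 1 := rfl

lemma aa_succ (z x : ℚ) (k : ℕ) :
    aa z x (k+1) = x * (∏ i ∈ Finset.range k, (x + (k+1)*z - (i+1))) / (Nat.factorial (k+1)) := by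
  simp [aa]

lemma aa_x_zero (z : ℚ) (k : ℕ) (hk : k ≠ 0) : aa z 0 k = 0 := by
  simp [aa, hk]

open Finset in
lemma prod_head (c : ℚ) (j : ℕ) :
    ∏ i ∈ range (j+1), (c - ((i:ℚ)+1)) = (c-1) * ∏ i ∈ range j, (c - ((i:ℚ)+2)) := by
  rw [Finset.prod_range_succ']
  rw [mul_comm]
  congr 1
  · norm_num
  · exact Finset.prod_congr rfl (fun i _ => by push_cast; ring)

open Finset in
lemma aa_pascal (z x : ℚ) (k : ℕ) (hk : k ≠ 0) :
    aa z x k = aa z (x-1) k + aa z (x-1+z) (k-1) := by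
  match k, hk with
  | 1, _ =>
    show aa z x 1 = aa z (x-1) 1 + aa z (x-1+z) 0
    rw [aa_succ, aa_succ, aa_zero']
    simp [Nat.factorial]
  | (j+2), _ =>
    show aa z x (j+1+1) = aa z (x-1) (j+1+1) + aa z (x-1+z) (j+1)
    rw [aa_succ, aa_succ, aa_succ]
    set c : ℚ := x + (((j+1:ℕ):ℚ)+1)*z with hc
    have h1 : ∏ i ∈ range (j+1), (x + (((j+1:ℕ):ℚ)+1)*z - ((i:ℚ)+1))
        = (c-1) * ∏ i ∈ range j, (c - ((i:ℚ)+2)) := prod_head c j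
    have h2 : ∏ i ∈ range (j+1), (x - 1 + (((j+1:ℕ):ℚ)+1)*z - ((i:ℚ)+1))
        = (∏ i ∈ range j, (c - ((i:ℚ)+2))) * (c - (j+2)) := by
      rw [Finset.prod_range_succ]
      congr 1
      · exact Finset.prod_congr rfl (fun i _ => by rw [hc]; ring)
      · rw [hc]; push_cast; ring
    have h3 : ∏ i ∈ range j, (x - 1 + z + (((j:ℕ):ℚ)+1)*z - ((i:ℚ)+1))
        = ∏ i ∈ range j, (c - ((i:ℚ)+2)) := by
      exact Finset.prod_congr rfl (fun i _ => by rw [hc]; push_cast; ring)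
    rw [h1, h2, h3]
    set Q : ℚ := ∏ i ∈ range j, (c - ((i:ℚ)+2))
    have hf : ((j+1+1).factorial : ℚ) = (j+2) * (j+1).factorial := by
      rw [Nat.factorial_succ]; push_cast; ring
    rw [hf]
    have hfne : ((j+1).factorial : ℚ) ≠ 0 := by positivity
    field_simp
    rw [hc]; push_cast; ring

noncomputable def ap (z : ℚ) (k : ℕ) : Polynomial ℚ :=
  if k = 0 then 1 else
    Polynomial.C ((Nat.factorial k : ℚ)⁻¹) * (Polynomial.X *
      ∏ i ∈ Finset.range (k-1), (Polynomial.X + Polynomial.C ((k:ℚ)*z - ((i:ℚ)+1))))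

open Polynomial in
lemma ap_eval (z : ℚ) (k : ℕ) (y : ℚ) : (ap z k).eval y = aa z y k := by
  by_cases hk : k = 0
  · simp [ap, aa, hk]
  · simp only [ap, aa, hk, if_false, eval_mul, eval_C, eval_X, eval_prod, eval_add]
    rw [div_eq_inv_mul]
    congr 2
    exact Finset.prod_congr rfl (fun i _ => by ring)

open Finset Polynomial in
lemma rothe : ∀ (K : ℕ) (z x y : ℚ),
    ∑ j ∈ Finset.range (K+1), aa z x j * aa z y (K-j) = aa z (x+y) K := by
  intro K
  induction K with
  | zero => intro z x y; simp [aa_zero']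
  | succ K IH =>
    intro z x y
    set P : Polynomial ℚ :=
      (∑ j ∈ Finset.range (K+2), Polynomial.C (aa z x j) * ap z (K+1-j)) -
        (ap z (K+1)).comp (Polynomial.X + Polynomial.C x) with hP
    have hev : ∀ t : ℚ, P.eval t =
        (∑ j ∈ Finset.range (K+2), aa z x j * aa z t (K+1-j)) - aa z (x+t) (K+1) := by
      intro t
      rw [hP]
      simp only [eval_sub, eval_finset_sum, eval_mul, eval_C, ap_eval, eval_comp, eval_add, eval_X]
      rw [add_comm t x]
    have hstep : ∀ t : ℚ, P.eval t = P.eval (t-1) := by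
      intro t
      rw [hev, hev]
      have hsum : ∑ j ∈ Finset.range (K+2), aa z x j * aa z t (K+1-j)
          = (∑ j ∈ Finset.range (K+2), aa z x j * aa z (t-1) (K+1-j)) + aa z (x+(t-1+z)) K := by
        rw [Finset.sum_range_succ (fun j => aa z x j * aa z t (K+1-j)) (K+1),
          Finset.sum_range_succ (fun j => aa z x j * aa z (t-1) (K+1-j)) (K+1)]
        have e1 : ∀ j ∈ Finset.range (K+1), aa z x j * aa z t (K+1-j)
            = aa z x j * aa z (t-1) (K+1-j) + aa z x j * aa z (t-1+z) (K-j) := by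
          intro j hj
          rw [Finset.mem_range] at hj
          have hne : K+1-j ≠ 0 := by omega
          have h2 : K+1-j-1 = K-j := by omega
          rw [aa_pascal z t (K+1-j) hne, h2]
          ring
        rw [Finset.sum_congr rfl e1, Finset.sum_add_distrib, IH z x (t-1+z)]
        have : K+1-(K+1) = 0 := by omega
        rw [this, aa_zero', aa_zero']
        ring
      rw [hsum]
      rw [aa_pascal z (x+t) (K+1) (by omega)]
      have e2 : x + t - 1 = x + (t-1) := by ring
      rw [e2]
      have e3 : x + (t-1) + z = x + (t-1+z) := by ring
      rw [e3]
      simp only [Nat.add_sub_cancel]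
      ring
    have hnat : ∀ j : ℕ, P.eval (j : ℚ) = 0 := by
      intro j
      induction j with
      | zero =>
        rw [hev]
        push_cast
        rw [Finset.sum_range_succ]
        have e1 : ∀ j ∈ Finset.range (K+1), aa z x j * aa z 0 (K+1-j) = 0 := by
          intro j hj
          rw [Finset.mem_range] at hj
          rw [aa_x_zero z (K+1-j) (by omega), mul_zero]
        rw [Finset.sum_congr rfl e1]
        have : K+1-(K+1) = 0 := by omega
        rw [this, aa_zero']
        simp
      | succ i ih =>
        have := hstep ((i:ℚ)+1)
        push_cast
        rw [this]
        simpa using ih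
    have hP0 : P = 0 := by
      apply Polynomial.eq_zero_of_infinite_isRoot
      apply Set.infinite_of_injective_forall_mem (f := fun j : ℕ => (j : ℚ))
        Nat.cast_injective
      intro j
      exact hnat j
    have := hev y
    rw [hP0] at this
    simp only [Polynomial.eval_zero] at this
    have h4 := sub_eq_zero.mp this.symm
    linarith [h4]

noncomputable def Cs (Dc z x : ℚ) : PowerSeries ℚ :=
  PowerSeries.mk fun k => Dc^k * aa z x k

open PowerSeries in
lemma Cs_mul (Dc z x y : ℚ) : Cs Dc z x * Cs Dc z y = Cs Dc z (x+y) := by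
  ext K
  rw [PowerSeries.coeff_mul, Finset.Nat.sum_antidiagonal_eq_sum_range_succ_mk]
  simp only [Cs, coeff_mk]
  rw [← rothe K z x y, Finset.mul_sum]
  apply Finset.sum_congr rfl
  intro j hj
  rw [Finset.mem_range] at hj
  have : Dc^j * Dc^(K-j) = Dc^K := by
    rw [← pow_add]; congr 1; omega
  calc Dc^j * aa z x j * (Dc^(K-j) * aa z y (K-j))
      = (Dc^j * Dc^(K-j)) * (aa z x j * aa z y (K-j)) := by ring
    _ = Dc^K * (aa z x j * aa z y (K-j)) := by rw [this]

open PowerSeries in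
lemma Cs_zero (Dc z : ℚ) : Cs Dc z 0 = 1 := by
  ext K
  simp only [Cs, coeff_mk, PowerSeries.coeff_one]
  cases K with
  | zero => simp [aa_zero']
  | succ K => simp [aa_x_zero z (K+1) (Nat.succ_ne_zero K)]

lemma Cs_pow (Dc z x : ℚ) (t : ℕ) : Cs Dc z x ^ t = Cs Dc z (t*x) := by
  induction t with
  | zero => simp [Cs_zero]
  | succ t ih =>
    rw [pow_succ, ih, Cs_mul]
    push_cast
    ring_nf

lemma aa_one_succ (z : ℚ) (K : ℕ) : aa z 1 (K+1) = aa z z K := by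
  cases K with
  | zero => simp [aa_succ, aa_zero', Nat.factorial]
  | succ K =>
    rw [aa_succ, aa_succ]
    rw [Finset.prod_range_succ']
    have e1 : ∀ i ∈ Finset.range K, (1:ℚ) + (((K+1:ℕ):ℚ)+1)*z - (((i+1:ℕ):ℚ)+1)
        = z + (((K:ℕ):ℚ)+1)*z - (((i:ℕ):ℚ)+1) := by
      intro i _; push_cast; ring
    rw [Finset.prod_congr rfl e1]
    have hf : ((K+1+1).factorial : ℚ) = (K+2) * (K+1).factorial := by
      rw [Nat.factorial_succ]; push_cast; ring
    rw [hf]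
    have hfne : ((K+1).factorial : ℚ) ≠ 0 := by positivity
    push_cast
    field_simp
    ring

open PowerSeries in
lemma Cs_one_eq (Dc z : ℚ) :
    Cs Dc z 1 = 1 + PowerSeries.C Dc * PowerSeries.X * Cs Dc z z := by
  ext K
  rw [map_add, mul_assoc, PowerSeries.coeff_C_mul]
  cases K with
  | zero =>
    simp [Cs, coeff_mk, aa_zero']
  | succ K =>
    rw [PowerSeries.coeff_succ_X_mul]
    simp only [Cs, coeff_mk, PowerSeries.coeff_one, Nat.succ_ne_zero, if_false]
    rw [aa_one_succ]
    ring

theorem stmt0 (n r : ℕ) (hr : 1 ≤ r) (d : Fin r → ℕ) (hd : ∀ k, 2 ≤ d k)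
    (m D : ℕ) (hm : m = ∑ k, d k) (hD : D = ∏ k, d k ^ d k)
    (hmn : m < n)
    (L μ : PowerSeries ℚ)
    (hL : L = PowerSeries.mk fun k =>
      (∏ i ∈ Finset.range (k - 1), ((k : ℚ) * (m : ℚ) + 1 - ((i : ℚ) + 1) * (n : ℚ))) /
          (Nat.factorial k : ℚ) * ((D : ℚ) / (n : ℚ)) ^ k)
    (hμ : μ = PowerSeries.mk fun k => if k = 0 then 0 else
      (D : ℚ) ^ k *
        (∏ i ∈ Finset.range (k - 1), ((k : ℚ) * (m : ℚ) + 1 - ((i : ℚ) + 1) * (n : ℚ))) /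
        ((Nat.factorial k : ℚ) * (k : ℚ) * (n : ℚ) ^ k)) :
    L = 1 + PowerSeries.X * dQ μ ∧
      L ^ n - (D : PowerSeries ℚ) * PowerSeries.X * L ^ m = 1 := by
  have hn0 : n ≠ 0 := by omega
  have hn : (n:ℚ) ≠ 0 := Nat.cast_ne_zero.mpr hn0
  constructor
  · -- part 1
    rw [hL, hμ]
    ext K
    rw [map_add]
    rw [PowerSeries.coeff_mk]
    cases K with
    | zero =>
      simp [dQ]
    | succ K =>
      rw [PowerSeries.coeff_succ_X_mul]
      simp only [dQ, PowerSeries.coeff_mk, PowerSeries.coeff_one, Nat.succ_ne_zero, if_false,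
        zero_add]
      have hK1 : ((K+1:ℕ):ℚ) ≠ 0 := by positivity
      have hfne : ((K+1).factorial : ℚ) ≠ 0 := by positivity
      rw [div_pow]
      field_simp
      rw [Finset.prod_congr rfl (fun (x:ℕ) _ => (by ring : ((K+1:ℕ):ℚ)*(m:ℚ) + 1 - ((x:ℚ)+1)*(n:ℚ) = ((K+1:ℕ):ℚ)*(m:ℚ) + 1 - (n:ℚ)*((x:ℚ)+1)))]
      ring
  · -- part 2
    have hLC : L = Cs (D:ℚ) ((m:ℚ)/(n:ℚ)) (1/(n:ℚ)) := by
      rw [hL]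
      ext K
      rw [PowerSeries.coeff_mk]
      simp only [Cs, PowerSeries.coeff_mk]
      cases K with
      | zero => simp [aa_zero']
      | succ K =>
        rw [aa_succ]
        have e1 : ∀ i ∈ Finset.range K,
            (1/(n:ℚ) + (((K:ℕ):ℚ)+1)*((m:ℚ)/(n:ℚ)) - ((i:ℚ)+1))
            = (((K+1:ℕ):ℚ) * (m:ℚ) + 1 - ((i:ℚ)+1)*(n:ℚ))/(n:ℚ) := by
          intro i _
          push_cast
          field_simp
          ring
        rw [Finset.prod_congr rfl e1, Finset.prod_div_distrib, Finset.prod_const,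
          Finset.card_range, Nat.add_sub_cancel]
        have hfne : ((K+1).factorial : ℚ) ≠ 0 := by positivity
        have hnK : (n:ℚ)^K ≠ 0 := pow_ne_zero _ hn
        rw [div_pow]
        field_simp
        ring
    have hLn : L ^ n = Cs (D:ℚ) ((m:ℚ)/(n:ℚ)) 1 := by
      rw [hLC, Cs_pow]
      congr 1
      field_simp
    have hLm : L ^ m = Cs (D:ℚ) ((m:ℚ)/(n:ℚ)) ((m:ℚ)/(n:ℚ)) := by
      rw [hLC, Cs_pow]
      congr 1
      field_simp
    have hcast : (D : PowerSeries ℚ) = PowerSeries.C (D:ℚ) := by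
      rw [map_natCast]
    rw [hLn, hLm, Cs_one_eq, hcast]
    ring
end

section
/- For every integer p ≥ 0 and every β ≥ 0, the coefficient of q^β in 𝔉_p(w,q) lies in ℚ[[w]]; that is, all coefficients of negative powers of w in 𝔉_p(w,q) vanish. -/
/-- The Laurent-series variable `w`. -/
noncomputable def Zl : LaurentSeries ℚ := HahnSeries.single (1 : ℤ) (1 : ℚ)

/-- The coefficients `c_{p,l}^{(β)}`. -/
noncomputable def ccoef (n r : ℕ) (d : Fin r → ℕ) (p β : ℕ) (l : ℤ) : ℚ :=
  if l < 0 then 0 else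
    PowerSeries.coeff (R := ℚ) l.toNat
      (((PowerSeries.X + (β : PowerSeries ℚ)) ^ p *
          ∏ k : Fin r, ∏ i ∈ Finset.range (d k * β),
            ((d k : PowerSeries ℚ) * PowerSeries.X + ((i + 1 : ℕ) : PowerSeries ℚ))) *
        (∏ j ∈ Finset.range β, (PowerSeries.X + ((j + 1 : ℕ) : PowerSeries ℚ)) ^ n)⁻¹)

/-- The operator `𝐃 = 1 + (q/w)·d/dq` on q-series with Laurent-series coefficients. -/
noncomputable def Dop (H : PowerSeries (LaurentSeries ℚ)) : PowerSeries (LaurentSeries ℚ) :=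
  PowerSeries.mk fun β =>
    (1 + HahnSeries.single (-1 : ℤ) ((β : ℕ) : ℚ)) * PowerSeries.coeff (R := LaurentSeries ℚ) β H

/-! ### Auxiliary definitions and lemmas -/

noncomputable abbrev phiL : PowerSeries ℚ →+* LaurentSeries ℚ := HahnSeries.ofPowerSeries ℤ ℚ

noncomputable def Pnum (r : ℕ) (d : Fin r → ℕ) (β : ℕ) : PowerSeries ℚ :=
  ∏ k : Fin r, ∏ i ∈ Finset.range (d k * β),
    ((d k : PowerSeries ℚ) * PowerSeries.X + ((i + 1 : ℕ) : PowerSeries ℚ))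

noncomputable def Qden (n β : ℕ) : PowerSeries ℚ :=
  ∏ j ∈ Finset.range β, (PowerSeries.X + ((j + 1 : ℕ) : PowerSeries ℚ)) ^ n

lemma Qden_const (n β : ℕ) : PowerSeries.constantCoeff (R := ℚ) (Qden n β) ≠ 0 := by
  rw [Qden, map_prod]
  refine Finset.prod_ne_zero_iff.2 fun j _ => ?_
  rw [map_pow, map_add, PowerSeries.constantCoeff_X, map_natCast]
  positivity

lemma phi_coeff_neg (t : ℤ) (ht : t < 0) (x : PowerSeries ℚ) : (phiL x).coeff t = 0 := by
  rw [HahnSeries.ofPowerSeries_apply]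
  apply HahnSeries.embDomain_notin_range
  rintro ⟨m, hm⟩
  replace hm : (m : ℤ) = t := hm
  omega

lemma Dop_iter (H : PowerSeries (LaurentSeries ℚ)) (l β : ℕ) :
    PowerSeries.coeff (R := LaurentSeries ℚ) β (Dop^[l] H) =
      (1 + HahnSeries.single (-1 : ℤ) ((β : ℕ) : ℚ)) ^ l *
        PowerSeries.coeff (R := LaurentSeries ℚ) β H := by
  induction l generalizing H with
  | zero => simp
  | succ l ih =>
    rw [Function.iterate_succ_apply, ih, Dop, PowerSeries.coeff_mk, pow_succ]
    ring

lemma ccoef_zero (n r : ℕ) (d : Fin r → ℕ) (q : ℕ) (t : ℤ) :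
    ccoef n r d q 0 t = if t = (q : ℤ) then 1 else 0 := by
  rw [ccoef]
  by_cases ht : t < 0
  · rw [if_pos ht, if_neg (by omega)]
  · rw [if_neg ht]
    simp only [Nat.mul_zero, Finset.range_zero, Finset.prod_empty, Finset.prod_const_one,
      Nat.cast_zero, add_zero, mul_one, inv_one, PowerSeries.coeff_X_pow]
    split_ifs with h1 h2
    · rfl
    · omega
    · omega
    · rfl

lemma ccoef_eq (n r : ℕ) (d : Fin r → ℕ) (q β : ℕ) (t : ℤ) (ht : ¬ t < 0) :
    ccoef n r d q β t = PowerSeries.coeff (R := ℚ) t.toNat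
      ((PowerSeries.X + (β : PowerSeries ℚ)) ^ q * (Pnum r d β * (Qden n β)⁻¹)) := by
  rw [ccoef, if_neg ht, Pnum, Qden, mul_assoc]

lemma natcast_laurent (c : ℕ) : ((c:ℕ) : LaurentSeries ℚ) = HahnSeries.single (0:ℤ) ((c:ℕ):ℚ) := by
  rw [← HahnSeries.C_apply, map_natCast]

lemma opfactor (c l : ℕ) :
    (1 + HahnSeries.single (-1 : ℤ) ((c : ℕ) : ℚ)) ^ l =
      HahnSeries.single (-(l : ℤ)) (1 : ℚ) *
        phiL ((PowerSeries.X + ((c : ℕ) : PowerSeries ℚ)) ^ l) := by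
  have h1 : (1 + HahnSeries.single (-1 : ℤ) ((c : ℕ) : ℚ)) =
      HahnSeries.single (-1 : ℤ) (1 : ℚ) * phiL (PowerSeries.X + ((c : ℕ) : PowerSeries ℚ)) := by
    rw [map_add, HahnSeries.ofPowerSeries_X, map_natCast phiL, natcast_laurent, mul_add,
      HahnSeries.single_mul_single, HahnSeries.single_mul_single]
    norm_num [HahnSeries.single_zero_one]
  rw [h1, mul_pow, map_pow, HahnSeries.single_pow, one_pow, smul_neg, nsmul_eq_mul, mul_one]

lemma combine (a b c e : ℤ) (r : ℚ) (x y : PowerSeries ℚ) (h : a + b + c = e) :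
    HahnSeries.single a r * (HahnSeries.single b (1:ℚ) * phiL x *
      (HahnSeries.single c (1:ℚ) * phiL y)) = HahnSeries.single e r * phiL (x * y) := by
  have h2 : HahnSeries.single a r * (HahnSeries.single b (1:ℚ) * phiL x *
      (HahnSeries.single c (1:ℚ) * phiL y)) =
      (HahnSeries.single a r * HahnSeries.single b 1 * HahnSeries.single c 1) *
        (phiL x * phiL y) := by ring
  rw [h2, HahnSeries.single_mul_single, HahnSeries.single_mul_single, mul_one, mul_one, h,
    map_mul]

lemma Fval (n r ν β : ℕ) (d : Fin r → ℕ) :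
    Zl ^ (ν * β) *
        (∏ k : Fin r, ∏ i ∈ Finset.range (d k * β),
          ((d k : LaurentSeries ℚ) * Zl + ((i + 1 : ℕ) : LaurentSeries ℚ))) /
        ∏ j ∈ Finset.range β, (Zl + ((j + 1 : ℕ) : LaurentSeries ℚ)) ^ n
      = HahnSeries.single ((ν * β : ℕ) : ℤ) (1:ℚ) * phiL (Pnum r d β * (Qden n β)⁻¹) := by
  have hQ : phiL (Qden n β) = ∏ j ∈ Finset.range β, (Zl + ((j + 1 : ℕ) : LaurentSeries ℚ)) ^ n := by
    rw [Qden, map_prod]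
    exact Finset.prod_congr rfl fun j _ => by
      rw [map_pow, map_add, HahnSeries.ofPowerSeries_X, map_natCast]; rfl
  have hP : phiL (Pnum r d β) = ∏ k : Fin r, ∏ i ∈ Finset.range (d k * β),
      ((d k : LaurentSeries ℚ) * Zl + ((i + 1 : ℕ) : LaurentSeries ℚ)) := by
    rw [Pnum, map_prod]
    refine Finset.prod_congr rfl fun k _ => ?_
    rw [map_prod]
    exact Finset.prod_congr rfl fun i _ => by
      rw [map_add, map_mul, HahnSeries.ofPowerSeries_X, map_natCast, map_natCast]; rfl
  have hQne : phiL (Qden n β) ≠ 0 := by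
    intro h
    have h0 : (phiL (Qden n β)).coeff ((0:ℕ):ℤ) = PowerSeries.coeff (R := ℚ) 0 (Qden n β) :=
      HahnSeries.ofPowerSeries_apply_coeff _ 0
    rw [h] at h0
    simp only [HahnSeries.coeff_zero] at h0
    exact Qden_const n β (by rw [← PowerSeries.coeff_zero_eq_constantCoeff, ← h0])
  have hZ : Zl ^ (ν * β) = HahnSeries.single ((ν * β : ℕ) : ℤ) (1:ℚ) := by
    rw [Zl, HahnSeries.single_pow, one_pow, nsmul_eq_mul, mul_one]
  rw [← hQ, ← hP, div_eq_iff hQne, hZ, mul_assoc, ← map_mul, mul_assoc,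
    PowerSeries.inv_mul_cancel _ (Qden_const n β), mul_one]

lemma natIccSum (M : ℕ) (f : ℤ → ℚ) :
    ∑ k ∈ Finset.Icc (0:ℤ) (M:ℤ), f k = ∑ l ∈ Finset.range (M+1), f (l:ℤ) := by
  refine Finset.sum_nbij' (fun k => k.toNat) (fun l => (l:ℤ)) ?_ ?_ ?_ ?_ ?_ <;>
    intro a ha <;> simp only [Finset.mem_Icc, Finset.mem_range] at ha ⊢
  · omega
  · omega
  · omega
  · omega
  · exact congrArg f (by omega)

lemma sumE (n r ν : ℕ) (d : Fin r → ℕ) (ct : ℕ → ℤ → ℕ → ℚ)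
    (hct0 : ∀ (p : ℕ) (l : ℤ), ct p l 0 = if l = (p : ℤ) then 1 else 0)
    (hctrec : ∀ (p : ℕ) (l : ℤ) (β : ℕ), 1 ≤ β → 0 ≤ l → l ≤ (p : ℤ) - (ν : ℤ) * (β : ℤ) →
      ct p l β = -∑ β₁ ∈ Finset.range β, ∑ k ∈ Finset.Icc (0 : ℤ) ((p : ℤ) - (ν : ℤ) * (β₁ : ℤ)),
        ct p k β₁ * ccoef n r d k.toNat (β - β₁) l)
    (hν1 : 1 ≤ ν) (p β : ℕ) (t : ℤ) (ht0 : 0 ≤ t) (ht : t < (p:ℤ) - (ν:ℤ)*(β:ℤ)) :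
    ∑ β₁ ∈ Finset.range (p/ν+1), ∑ l ∈ Finset.range (p - ν*β₁ + 1),
      ct p (l:ℤ) β₁ * (if β₁ ≤ β then ccoef n r d l (β-β₁) t else 0) = 0 := by
  have hc : ((ν*β:ℕ):ℤ) = (ν:ℤ)*(β:ℤ) := by push_cast; ring
  have hνβ : ν*β < p := by
    have : ((ν*β:ℕ):ℤ) < (p:ℤ) := by omega
    exact_mod_cast this
  have hβle : β ≤ p/ν := (Nat.le_div_iff_mul_le (by omega)).2 (by rw [mul_comm]; omega)
  rw [← Finset.sum_subset (Finset.range_subset_range.2 (by omega : β+1 ≤ p/ν+1))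
    (fun x _ hx => Finset.sum_eq_zero fun l _ => by
      rw [if_neg (by simp at hx ⊢; omega), mul_zero])]
  have hstep : ∀ β₁ ∈ Finset.range (β+1),
      (∑ l ∈ Finset.range (p - ν*β₁ + 1), ct p (l:ℤ) β₁ *
        (if β₁ ≤ β then ccoef n r d l (β-β₁) t else 0))
      = ∑ l ∈ Finset.range (p - ν*β₁ + 1), ct p (l:ℤ) β₁ * ccoef n r d l (β-β₁) t := by
    intro β₁ hβ₁
    exact Finset.sum_congr rfl fun l _ => by
      rw [if_pos (by simp at hβ₁; omega)]
  rw [Finset.sum_congr rfl hstep, Finset.sum_range_succ]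
  have hlast : ∑ l ∈ Finset.range (p - ν*β + 1), ct p (l:ℤ) β * ccoef n r d l (β-β) t
      = ct p t β := by
    rw [Nat.sub_self]
    rw [Finset.sum_eq_single_of_mem t.toNat (Finset.mem_range.2 (by omega))]
    · rw [ccoef_zero, if_pos (by omega), mul_one, Int.toNat_of_nonneg ht0]
    · intro l _ hl
      rw [ccoef_zero, if_neg (by omega), mul_zero]
  rw [hlast]
  have hrest : ∀ β₁ ∈ Finset.range β,
      (∑ l ∈ Finset.range (p - ν*β₁ + 1), ct p (l:ℤ) β₁ * ccoef n r d l (β-β₁) t)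
      = ∑ k ∈ Finset.Icc (0 : ℤ) ((p : ℤ) - (ν : ℤ) * (β₁ : ℤ)),
          ct p k β₁ * ccoef n r d k.toNat (β - β₁) t := by
    intro β₁ hβ₁
    have hβ₁β : β₁ < β := Finset.mem_range.1 hβ₁
    have hν₁ : ν * β₁ ≤ p := le_of_lt (lt_of_le_of_lt (Nat.mul_le_mul_left ν hβ₁β.le) hνβ)
    have hcast : ((p - ν*β₁ : ℕ) : ℤ) = (p:ℤ) - (ν:ℤ)*(β₁:ℤ) := by push_cast [hν₁]; ring
    rw [← hcast, natIccSum (p - ν*β₁) (fun k => ct p k β₁ * ccoef n r d k.toNat (β - β₁) t)]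
    simp only [Int.toNat_natCast]
  rw [Finset.sum_congr rfl hrest]
  by_cases hβ0 : β = 0
  · subst hβ0
    simp only [Finset.range_zero, Finset.sum_empty, zero_add]
    rw [hct0, if_neg (by omega)]
  · rw [hctrec p t β (by omega) ht0 (by omega)]
    ring

theorem stmt8 (n r : ℕ) (hr : 1 ≤ r) (d : Fin r → ℕ) (hd : ∀ k, 2 ≤ d k)
    (m D : ℕ) (hm : m = ∑ k, d k) (hD : D = ∏ k, d k ^ d k)
    (ν : ℕ) (hν : ν = n - m) (hmn : m < n)
    -- the coefficients c̃_{p,l}^{(β)}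
    (ct : ℕ → ℤ → ℕ → ℚ)
    (hct0 : ∀ (p : ℕ) (l : ℤ), ct p l 0 = if l = (p : ℤ) then 1 else 0)
    (hctz : ∀ (p : ℕ) (l : ℤ) (β : ℕ),
      (l < 0 ∨ (p : ℤ) - (ν : ℤ) * (β : ℤ) < l) → ct p l β = 0)
    (hctrec : ∀ (p : ℕ) (l : ℤ) (β : ℕ), 1 ≤ β → 0 ≤ l → l ≤ (p : ℤ) - (ν : ℤ) * (β : ℤ) →
      ct p l β = -∑ β₁ ∈ Finset.range β, ∑ k ∈ Finset.Icc (0 : ℤ) ((p : ℤ) - (ν : ℤ) * (β₁ : ℤ)),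
        ct p k β₁ * ccoef n r d k.toNat (β - β₁) l)
    -- the series 𝔉(w,q)
    (F : PowerSeries (LaurentSeries ℚ))
    (hF : ∀ β : ℕ, PowerSeries.coeff (R := LaurentSeries ℚ) β F =
      Zl ^ (ν * β) *
        (∏ k : Fin r, ∏ i ∈ Finset.range (d k * β),
          ((d k : LaurentSeries ℚ) * Zl + ((i + 1 : ℕ) : LaurentSeries ℚ))) /
        ∏ j ∈ Finset.range β, (Zl + ((j + 1 : ℕ) : LaurentSeries ℚ)) ^ n)
    -- the series 𝔉_p(w,q)
    (Fp : ℕ → PowerSeries (LaurentSeries ℚ))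
    (hFp : ∀ p : ℕ, Fp p =
      ∑ β ∈ Finset.range (p / ν + 1), ∑ l ∈ Finset.range (p - ν * β + 1),
        PowerSeries.C (R := LaurentSeries ℚ)
            (HahnSeries.single (-((p : ℤ) - (ν : ℤ) * (β : ℤ) - (l : ℤ))) (ct p (l : ℤ) β)) *
          PowerSeries.X ^ β * Dop^[l] F) :
    -- the q-coefficients of 𝔉_p have no negative powers of w
    ∀ (p β : ℕ) (j : ℤ), j < 0 → (PowerSeries.coeff (R := LaurentSeries ℚ) β (Fp p)).coeff j = 0 := by
  intro p β j hj
  have hν1 : 1 ≤ ν := by omega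
  set t : ℤ := j + (p:ℤ) - (ν:ℤ)*(β:ℤ) with hts
  have hmain : ∀ β₁ ∈ Finset.range (p/ν+1), ∀ l ∈ Finset.range (p - ν*β₁ + 1),
      (PowerSeries.coeff (R := LaurentSeries ℚ) β
        (PowerSeries.C (R := LaurentSeries ℚ)
          (HahnSeries.single (-((p : ℤ) - (ν : ℤ) * (β₁ : ℤ) - (l : ℤ))) (ct p (l : ℤ) β₁)) *
          PowerSeries.X ^ β₁ * Dop^[l] F)).coeff j
      = ct p (l:ℤ) β₁ *
          (if β₁ ≤ β then (phiL ((PowerSeries.X + ((β - β₁ : ℕ) : PowerSeries ℚ)) ^ l *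
            (Pnum r d (β-β₁) * (Qden n (β-β₁))⁻¹))).coeff t else 0) := by
    intro β₁ hβ₁ l hl
    have hβ₁' : β₁ ≤ p / ν := by
      have := Finset.mem_range.1 hβ₁; omega
    have hνβ₁ : ν * β₁ ≤ p :=
      le_trans (Nat.mul_le_mul_left ν hβ₁') (by rw [mul_comm]; exact Nat.div_mul_le_self p ν)
    have hlle : l ≤ p - ν * β₁ := by
      have := Finset.mem_range.1 hl; omega
    rw [mul_assoc, PowerSeries.coeff_C_mul, PowerSeries.coeff_X_pow_mul']
    by_cases hb : β₁ ≤ β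
    · rw [if_pos hb, if_pos hb, Dop_iter, hF (β - β₁), Fval n r ν (β-β₁) d,
        opfactor (β-β₁) l,
        combine _ _ _ ((ν:ℤ)*(β:ℤ) - (p:ℤ)) _ _ _
          (by push_cast [Nat.cast_sub hb]; ring),
        show j = t + ((ν:ℤ)*(β:ℤ) - (p:ℤ)) by omega,
        HahnSeries.coeff_single_mul_add]
    · rw [if_neg hb, if_neg hb, mul_zero, mul_zero, HahnSeries.coeff_zero]
  have e1 : ∀ (s : Finset ℕ) (f : ℕ → LaurentSeries ℚ),
      (∑ x ∈ s, f x).coeff j = ∑ x ∈ s, (f x).coeff j :=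
    fun s f => map_sum (HahnSeries.coeff.addMonoidHom j) f s
  have hsum : (PowerSeries.coeff (R := LaurentSeries ℚ) β (Fp p)).coeff j
      = ∑ β₁ ∈ Finset.range (p/ν+1), ∑ l ∈ Finset.range (p - ν*β₁ + 1),
          ct p (l:ℤ) β₁ *
            (if β₁ ≤ β then (phiL ((PowerSeries.X + ((β - β₁ : ℕ) : PowerSeries ℚ)) ^ l *
              (Pnum r d (β-β₁) * (Qden n (β-β₁))⁻¹))).coeff t else 0) := by
    rw [hFp p, map_sum, e1]
    refine Finset.sum_congr rfl fun β₁ hβ₁ => ?_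
    rw [map_sum, e1]
    exact Finset.sum_congr rfl fun l hl => hmain β₁ hβ₁ l hl
  rw [hsum]
  by_cases ht0 : t < 0
  · exact Finset.sum_eq_zero fun β₁ _ => Finset.sum_eq_zero fun l _ => by
      rw [phi_coeff_neg t ht0, ite_self, mul_zero]
  · push_neg at ht0
    have hcongr : ∀ β₁ ∈ Finset.range (p/ν+1), ∀ l ∈ Finset.range (p - ν*β₁ + 1),
        ct p (l:ℤ) β₁ *
          (if β₁ ≤ β then (phiL ((PowerSeries.X + ((β - β₁ : ℕ) : PowerSeries ℚ)) ^ l *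
            (Pnum r d (β-β₁) * (Qden n (β-β₁))⁻¹))).coeff t else 0)
        = ct p (l:ℤ) β₁ * (if β₁ ≤ β then ccoef n r d l (β-β₁) t else 0) := by
      intro β₁ _ l _
      congr 1
      by_cases hb : β₁ ≤ β
      · rw [if_pos hb, if_pos hb, ccoef_eq n r d l (β-β₁) t (not_lt.2 ht0),
          show t = ((t.toNat:ℕ):ℤ) from (Int.toNat_of_nonneg ht0).symm,
          HahnSeries.ofPowerSeries_apply_coeff]
        simp [Int.toNat_of_nonneg ht0]
      · rw [if_neg hb, if_neg hb]
    rw [Finset.sum_congr rfl fun β₁ hβ₁ =>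
      Finset.sum_congr rfl fun l hl => hcongr β₁ hβ₁ l hl]
    exact sumE n r ν d ct hct0 hctrec hν1 p β t ht0 (by omega)
end
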